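/- Let H be an N×N complex Hadamard matrix, with profile matrix Q_{ab,cd} = (1/N)·Σ_i H_{ia}H_{id}·conj(H_{ib}H_{ic}). For r ≥ 1 define the matrix X = X^{(r)} ∈ M_{N^r}(ℂ) by X_{a₁…a_r, b₁…b_r} = Q_{a₁b₁,a₂b₂}·Q_{a₂b₂,a₃b₃}⋯Q_{a_rb_r,a₁b₁} (indices cyclic). Then for all p ≥ 1, Tr(T_p^r) = (1/N^r)·Tr(X^p), where T_p ∈ M_{N^p}(ℂ) has entries (T_p)_{i₁…i_p, j₁…j_p} = tr(P_{i₁j₁}⋯P_{i_pj_p}). -/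

import Mathlib

open Matrix BigOperators ComplexConjugate

/-- `H` is a complex Hadamard matrix. -/
def IsHadamard {I : Type*} [Fintype I] [DecidableEq I] (H : Matrix I I ℂ) : Prop :=
  (∀ i j, ‖H i j‖ = 1) ∧
  (∀ i j, ∑ k, H i k * conj (H j k) = if i = j then (Fintype.card I : ℂ) else 0)

/-- The rank-one projection `P_{ij} = Proj(H_i/H_j)`. -/
noncomputable def hadamardProj {I : Type*} [Fintype I] (H : Matrix I I ℂ) (i j : I) :
    Matrix I I ℂ :=
  fun k l => (Fintype.card I : ℂ)⁻¹ * H i k * H j l * conj (H i l * H j k)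

/-- The matrix `T_p`, with entries `(T_p)_{i₁…i_p,j₁…j_p} = tr(P_{i₁j₁}⋯P_{i_pj_p})`. -/
noncomputable def Tmat {I : Type*} [Fintype I] [DecidableEq I] (H : Matrix I I ℂ) (p : ℕ) :
    Matrix (Fin p → I) (Fin p → I) ℂ :=
  fun i j => (Fintype.card I : ℂ)⁻¹ *
    Matrix.trace ((List.ofFn fun s => hadamardProj H (i s) (j s)).prod)

/-- The profile matrix of `H`: `Q_{ab,cd} = (1/N)·∑_i H_{ia}·H_{id}·conj(H_{ib}·H_{ic})`. -/
noncomputable def profile {I : Type*} [Fintype I] (H : Matrix I I ℂ) (a b c d : I) : ℂ :=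
  (Fintype.card I : ℂ)⁻¹ * ∑ i, H i a * H i d * conj (H i b * H i c)

/-- The truncation matrix of order `r`: `X^{(r)} ∈ M_{N^r}(ℂ)`,
`X_{a₁…a_r,b₁…b_r} = Q_{a₁b₁,a₂b₂}⋯Q_{a_rb_r,a₁b₁}` (cyclic indices, via `finRotate`). -/
noncomputable def trunc {I : Type*} [Fintype I] (H : Matrix I I ℂ) (r : ℕ) :
    Matrix (Fin r → I) (Fin r → I) ℂ :=
  fun a b => ∏ s : Fin r,
    profile H (a s) (b s) (a (finRotate r s)) (b (finRotate r s))

section TraceLemmas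

variable {I : Type*} [Fintype I] [DecidableEq I]

lemma trace_mul_ofFn_prod : ∀ (n : ℕ) (A : Fin n → Matrix I I ℂ) (M : Matrix I I ℂ),
    Matrix.trace (M * (List.ofFn A).prod) =
      ∑ k : Fin (n + 1) → I,
        M (k (Fin.last n)) (k 0) * ∏ s : Fin n, A s (k s.castSucc) (k s.succ)
  | 0, A, M => by
    rw [List.ofFn_zero, List.prod_nil, mul_one]
    rw [← Equiv.sum_comp (Equiv.funUnique (Fin 1) I).symm
      (fun k : Fin 1 → I => M (k (Fin.last 0)) (k 0) * ∏ s : Fin 0, A s (k s.castSucc) (k s.succ))]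
    simp [Matrix.trace, Matrix.diag]
  | (n + 1), A, M => by
    rw [List.ofFn_succ, List.prod_cons, ← mul_assoc,
      trace_mul_ofFn_prod n (fun i => A i.succ) (M * A 0)]
    rw [← Equiv.sum_comp (Fin.consEquiv fun _ : Fin (n + 2) => I)
      (fun k : Fin (n + 2) → I =>
        M (k (Fin.last (n + 1))) (k 0) * ∏ s : Fin (n + 1), A s (k s.castSucc) (k s.succ))]
    rw [Fintype.sum_prod_type]
    simp only [Matrix.mul_apply, Finset.sum_mul]
    rw [Finset.sum_comm]
    refine Finset.sum_congr rfl fun x _ => Finset.sum_congr rfl fun k _ => ?_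
    simp only [Fin.consEquiv_apply]
    rw [Fin.prod_univ_succ]
    have hlast : (Fin.cons x k : Fin (n + 2) → I) (Fin.last (n + 1)) = k (Fin.last n) := by
      rw [← Fin.succ_last, Fin.cons_succ]
    have hcs : ∀ s : Fin n, (Fin.cons x k : Fin (n + 2) → I) s.succ.castSucc = k s.castSucc := by
      intro s
      rw [← Fin.succ_castSucc, Fin.cons_succ]
    simp only [hlast, Fin.cons_zero, Fin.cons_succ, Fin.castSucc_zero, hcs]
    ring

lemma trace_ofFn_prod (n : ℕ) (A : Fin (n + 1) → Matrix I I ℂ) :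
    Matrix.trace (List.ofFn A).prod =
      ∑ k : Fin (n + 1) → I, ∏ s : Fin (n + 1), A s (k s) (k (finRotate (n + 1) s)) := by
  rw [List.ofFn_succ', List.prod_concat, Matrix.trace_mul_comm,
    trace_mul_ofFn_prod n (fun i => A i.castSucc) (A (Fin.last n))]
  refine Finset.sum_congr rfl fun k _ => ?_
  rw [Fin.prod_univ_castSucc]
  have h1 : ∀ s : Fin n, k (finRotate (n + 1) s.castSucc) = k s.succ := by
    intro s
    rw [finRotate_succ_apply, Fin.coeSucc_eq_succ]
  have h2 : k (finRotate (n + 1) (Fin.last n)) = k 0 := by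
    rw [finRotate_last]
  simp only [h1, h2, Function.comp]
  ring

lemma trace_pow_eq (n : ℕ) (M : Matrix I I ℂ) :
    Matrix.trace (M ^ (n + 1)) =
      ∑ k : Fin (n + 1) → I, ∏ s : Fin (n + 1), M (k s) (k (finRotate (n + 1) s)) := by
  have h : M ^ (n + 1) = (List.ofFn fun _ : Fin (n + 1) => M).prod := by
    rw [List.ofFn_const, List.prod_replicate]
  rw [h, trace_ofFn_prod]

lemma prod_const_mul {α : Type*} [Fintype α] (c : ℂ) (v : α → ℂ) :
    ∏ a : α, (c * v a) = c ^ Fintype.card α * ∏ a : α, v a := by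
  rw [Finset.prod_mul_distrib, Finset.prod_const, Finset.card_univ]

end TraceLemmas

section MainAux

variable {N : ℕ} (H : Matrix (Fin N) (Fin N) ℂ)

lemma lhs_eq (p r : ℕ) :
    Matrix.trace (Tmat H (p + 1) ^ (r + 1)) =
      ((N : ℂ)⁻¹) ^ ((p + 2) * (r + 1)) *
        ∑ f : Fin (r + 1) → Fin (p + 1) → Fin N,
          ∑ k : Fin (r + 1) → Fin (p + 1) → Fin N,
            ∏ t : Fin (r + 1), ∏ s : Fin (p + 1),
              (H (f t s) (k t s) * H (f (t + 1) s) (k t (s + 1)) *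
                conj (H (f t s) (k t (s + 1)) * H (f (t + 1) s) (k t s))) := by
  have hT : ∀ i j : Fin (p + 1) → Fin N, Tmat H (p + 1) i j =
      ((N : ℂ)⁻¹) ^ (p + 2) *
        ∑ k : Fin (p + 1) → Fin N, ∏ s : Fin (p + 1),
          (H (i s) (k s) * H (j s) (k (s + 1)) *
            conj (H (i s) (k (s + 1)) * H (j s) (k s))) := by
    intro i j
    simp only [Tmat, Fintype.card_fin]
    rw [trace_ofFn_prod]
    simp only [hadamardProj, Fintype.card_fin, finRotate_succ_apply]
    rw [Finset.sum_congr rfl fun (k : Fin (p + 1) → Fin N) _ =>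
      (Finset.prod_congr rfl fun s _ => show
        (N : ℂ)⁻¹ * H (i s) (k s) * H (j s) (k (s + 1)) *
            conj (H (i s) (k (s + 1)) * H (j s) (k s)) =
          (N : ℂ)⁻¹ * (H (i s) (k s) * H (j s) (k (s + 1)) *
            conj (H (i s) (k (s + 1)) * H (j s) (k s))) from by ring)]
    rw [Finset.sum_congr rfl fun (k : Fin (p + 1) → Fin N) _ =>
      prod_const_mul ((N : ℂ)⁻¹) _]
    rw [← Finset.mul_sum, Fintype.card_fin, ← mul_assoc, ← pow_succ']
  rw [trace_pow_eq]
  simp only [finRotate_succ_apply]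
  rw [Finset.sum_congr rfl fun (f : Fin (r + 1) → Fin (p + 1) → Fin N) _ =>
    Finset.prod_congr rfl fun t _ => hT (f t) (f (t + 1))]
  rw [Finset.sum_congr rfl fun (f : Fin (r + 1) → Fin (p + 1) → Fin N) _ =>
    prod_const_mul _ _]
  rw [← Finset.mul_sum, Fintype.card_fin, ← pow_mul]
  congr 1
  refine Finset.sum_congr rfl fun f _ => ?_
  rw [Fintype.prod_sum]

lemma rhs_eq (p r : ℕ) :
    ((N : ℂ) ^ (r + 1))⁻¹ * Matrix.trace (trunc H (r + 1) ^ (p + 1)) =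
      ((N : ℂ)⁻¹) ^ ((p + 2) * (r + 1)) *
        ∑ g : Fin (p + 1) → Fin (r + 1) → Fin N,
          ∑ m : Fin (p + 1) → Fin (r + 1) → Fin N,
            ∏ t : Fin (p + 1), ∏ s : Fin (r + 1),
              (H (m t s) (g t s) * H (m t s) (g (t + 1) (s + 1)) *
                conj (H (m t s) (g (t + 1) s) * H (m t s) (g t (s + 1)))) := by
  rw [trace_pow_eq]
  simp only [trunc, profile, Fintype.card_fin, finRotate_succ_apply]
  rw [Finset.sum_congr rfl fun (g : Fin (p + 1) → Fin (r + 1) → Fin N) _ =>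
    Finset.prod_congr rfl fun t _ => prod_const_mul ((N : ℂ)⁻¹) _]
  rw [Finset.sum_congr rfl fun (g : Fin (p + 1) → Fin (r + 1) → Fin N) _ =>
    prod_const_mul _ _]
  rw [← Finset.mul_sum, Fintype.card_fin, Fintype.card_fin, ← pow_mul, ← inv_pow,
    ← mul_assoc, ← pow_add]
  have he : r + 1 + (r + 1) * (p + 1) = (p + 2) * (r + 1) := by ring
  rw [he]
  congr 1
  refine Finset.sum_congr rfl fun g _ => ?_
  rw [Finset.prod_congr rfl fun (t : Fin (p + 1)) _ =>
    Fintype.prod_sum fun (s : Fin (r + 1)) (x : Fin N) =>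
      (H x (g t s) * H x (g (t + 1) (s + 1)) *
        conj (H x (g (t + 1) s) * H x (g t (s + 1))))]
  rw [Fintype.prod_sum]


/-- The index-swapping bijection used to match the two tensor-network contractions. -/
def tq (p r N : ℕ) : (Fin (r + 1) → Fin (p + 1) → Fin N) ≃ (Fin (p + 1) → Fin (r + 1) → Fin N) where
  toFun h t s := h (-s) t
  invFun h t s := h s (-t)
  left_inv h := by funext t s; simp
  right_inv h := by funext t s; simp

lemma key (p r : ℕ) (f k : Fin (r + 1) → Fin (p + 1) → Fin N) :
    (∏ t : Fin (r + 1), ∏ s : Fin (p + 1),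
      (H (f t s) (k t s) * H (f (t + 1) s) (k t (s + 1)) *
        conj (H (f t s) (k t (s + 1)) * H (f (t + 1) s) (k t s)))) =
    ∏ t : Fin (p + 1), ∏ s : Fin (r + 1),
      (H (tq p r N f t s) (tq p r N k t s) *
          H (tq p r N f t s) (tq p r N k (t + 1) (s + 1)) *
        conj (H (tq p r N f t s) (tq p r N k (t + 1) s) *
          H (tq p r N f t s) (tq p r N k t (s + 1)))) := by
  simp only [tq, Equiv.coe_fn_mk]
  calc
    (∏ t : Fin (r + 1), ∏ s : Fin (p + 1),
        (H (f t s) (k t s) * H (f (t + 1) s) (k t (s + 1)) *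
          conj (H (f t s) (k t (s + 1)) * H (f (t + 1) s) (k t s))))
        = ∏ x : Fin (r + 1) × Fin (p + 1),
            (H (f x.1 x.2) (k x.1 x.2) * H (f (x.1 + 1) x.2) (k x.1 (x.2 + 1)) *
              conj (H (f x.1 x.2) (k x.1 (x.2 + 1)) * H (f (x.1 + 1) x.2) (k x.1 x.2))) :=
      (Fintype.prod_prod_type' _).symm
    _ = ∏ x : Fin (r + 1) × Fin (p + 1),
          ((H (f x.1 x.2) (k x.1 x.2) * conj (H (f (x.1 + 1) x.2) (k x.1 x.2))) *
            (H (f (x.1 + 1) x.2) (k x.1 (x.2 + 1)) * conj (H (f x.1 x.2) (k x.1 (x.2 + 1))))) :=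
      Finset.prod_congr rfl fun x _ => by simp only [_root_.map_mul]; ring
    _ = (∏ x : Fin (r + 1) × Fin (p + 1),
            (H (f x.1 x.2) (k x.1 x.2) * conj (H (f (x.1 + 1) x.2) (k x.1 x.2)))) *
          ∏ x : Fin (r + 1) × Fin (p + 1),
            (H (f (x.1 + 1) x.2) (k x.1 (x.2 + 1)) * conj (H (f x.1 x.2) (k x.1 (x.2 + 1)))) :=
      Finset.prod_mul_distrib
    _ = (∏ x : Fin (r + 1) × Fin (p + 1),
            (H (f x.1 x.2) (k x.1 x.2) * conj (H (f (x.1 + 1) x.2) (k x.1 x.2)))) *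
          ∏ x : Fin (r + 1) × Fin (p + 1),
            (H (f (x.1 + 1) (x.2 - 1)) (k x.1 x.2) * conj (H (f x.1 (x.2 - 1)) (k x.1 x.2))) := by
      congr 1
      refine Fintype.prod_equiv
        (Equiv.prodCongr (Equiv.refl (Fin (r + 1))) (Equiv.addRight (1 : Fin (p + 1)))) _ _
        fun x => ?_
      obtain ⟨a, b⟩ := x
      have h2 : b + 1 - 1 = b := add_sub_cancel_right _ _
      simp only [Equiv.prodCongr_apply, Equiv.coe_refl, Prod.map_apply, id_eq,
        Equiv.coe_addRight, h2]
    _ = ∏ x : Fin (r + 1) × Fin (p + 1),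
          ((H (f x.1 x.2) (k x.1 x.2) * conj (H (f (x.1 + 1) x.2) (k x.1 x.2))) *
            (H (f (x.1 + 1) (x.2 - 1)) (k x.1 x.2) * conj (H (f x.1 (x.2 - 1)) (k x.1 x.2)))) :=
      Finset.prod_mul_distrib.symm
    _ = ∏ y : Fin (p + 1) × Fin (r + 1),
          (H (f (-y.2) y.1) (k (-y.2) y.1) * H (f (-(y.2 - 1)) (y.1 - 1)) (k (-y.2) y.1) *
            conj (H (f (-y.2) (y.1 - 1)) (k (-y.2) y.1)) *
            conj (H (f (-(y.2 - 1)) y.1) (k (-y.2) y.1))) := by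
      refine Fintype.prod_equiv
        ((Equiv.prodComm (Fin (r + 1)) (Fin (p + 1))).trans
          (Equiv.prodCongr (Equiv.refl (Fin (p + 1))) (Equiv.neg (Fin (r + 1))))) _ _
        fun x => ?_
      obtain ⟨a, b⟩ := x
      have h1 : -(-a) = a := neg_neg _
      have h3 : -(-a - 1) = a + 1 := by rw [neg_sub, sub_neg_eq_add]; exact add_comm 1 a
      simp only [Equiv.trans_apply, Equiv.prodComm_apply, Prod.swap_prod_mk,
        Equiv.prodCongr_apply, Equiv.coe_refl, Prod.map_apply, id_eq, Equiv.neg_apply, h1, h3]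
      ring
    _ = (∏ y : Fin (p + 1) × Fin (r + 1), H (f (-y.2) y.1) (k (-y.2) y.1)) *
          (∏ y : Fin (p + 1) × Fin (r + 1), H (f (-(y.2 - 1)) (y.1 - 1)) (k (-y.2) y.1)) *
          (∏ y : Fin (p + 1) × Fin (r + 1), conj (H (f (-y.2) (y.1 - 1)) (k (-y.2) y.1))) *
          ∏ y : Fin (p + 1) × Fin (r + 1), conj (H (f (-(y.2 - 1)) y.1) (k (-y.2) y.1)) := by
      rw [Finset.prod_mul_distrib, Finset.prod_mul_distrib, Finset.prod_mul_distrib]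
    _ = (∏ y : Fin (p + 1) × Fin (r + 1), H (f (-y.2) y.1) (k (-y.2) y.1)) *
          (∏ y : Fin (p + 1) × Fin (r + 1), H (f (-y.2) y.1) (k (-(y.2 + 1)) (y.1 + 1))) *
          (∏ y : Fin (p + 1) × Fin (r + 1), conj (H (f (-y.2) y.1) (k (-y.2) (y.1 + 1)))) *
          ∏ y : Fin (p + 1) × Fin (r + 1), conj (H (f (-y.2) y.1) (k (-(y.2 + 1)) y.1)) := by
      congr 1
      · congr 1
        · congr 1
          refine (Fintype.prod_equiv
            (Equiv.prodCongr (Equiv.addRight (1 : Fin (p + 1))) (Equiv.addRight (1 : Fin (r + 1))))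
            _ _ fun y => ?_).symm
          obtain ⟨a, b⟩ := y
          have h1 : a + 1 - 1 = a := add_sub_cancel_right _ _
          have h2 : b + 1 - 1 = b := add_sub_cancel_right _ _
          simp only [Equiv.prodCongr_apply, Prod.map_apply, Equiv.coe_addRight, h1, h2]
        · refine (Fintype.prod_equiv
            (Equiv.prodCongr (Equiv.addRight (1 : Fin (p + 1))) (Equiv.refl (Fin (r + 1))))
            _ _ fun y => ?_).symm
          obtain ⟨a, b⟩ := y
          have h1 : a + 1 - 1 = a := add_sub_cancel_right _ _
          simp only [Equiv.prodCongr_apply, Prod.map_apply, Equiv.coe_addRight, Equiv.coe_refl,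
            id_eq, h1]
      · refine (Fintype.prod_equiv
          (Equiv.prodCongr (Equiv.refl (Fin (p + 1))) (Equiv.addRight (1 : Fin (r + 1))))
          _ _ fun y => ?_).symm
        obtain ⟨a, b⟩ := y
        have h2 : b + 1 - 1 = b := add_sub_cancel_right _ _
        simp only [Equiv.prodCongr_apply, Prod.map_apply, Equiv.coe_addRight, Equiv.coe_refl,
          id_eq, h2]
    _ = ∏ y : Fin (p + 1) × Fin (r + 1),
          (H (f (-y.2) y.1) (k (-y.2) y.1) * H (f (-y.2) y.1) (k (-(y.2 + 1)) (y.1 + 1)) *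
            conj (H (f (-y.2) y.1) (k (-y.2) (y.1 + 1)) *
              H (f (-y.2) y.1) (k (-(y.2 + 1)) y.1))) := by
      rw [← Finset.prod_mul_distrib, ← Finset.prod_mul_distrib, ← Finset.prod_mul_distrib]
      exact Finset.prod_congr rfl fun y _ => by simp only [_root_.map_mul]; ring
    _ = ∏ t : Fin (p + 1), ∏ s : Fin (r + 1),
          (H (f (-s) t) (k (-s) t) * H (f (-s) t) (k (-(s + 1)) (t + 1)) *
            conj (H (f (-s) t) (k (-s) (t + 1)) * H (f (-s) t) (k (-(s + 1)) t))) :=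
      Fintype.prod_prod_type' (f := fun t s =>
        (H (f (-s) t) (k (-s) t) * H (f (-s) t) (k (-(s + 1)) (t + 1)) *
          conj (H (f (-s) t) (k (-s) (t + 1)) * H (f (-s) t) (k (-(s + 1)) t))))

lemma core (p r : ℕ) :
    (∑ f : Fin (r + 1) → Fin (p + 1) → Fin N,
       ∑ k : Fin (r + 1) → Fin (p + 1) → Fin N,
         ∏ t : Fin (r + 1), ∏ s : Fin (p + 1),
           (H (f t s) (k t s) * H (f (t + 1) s) (k t (s + 1)) *
             conj (H (f t s) (k t (s + 1)) * H (f (t + 1) s) (k t s)))) =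
    ∑ g : Fin (p + 1) → Fin (r + 1) → Fin N,
      ∑ m : Fin (p + 1) → Fin (r + 1) → Fin N,
        ∏ t : Fin (p + 1), ∏ s : Fin (r + 1),
          (H (m t s) (g t s) * H (m t s) (g (t + 1) (s + 1)) *
            conj (H (m t s) (g (t + 1) s) * H (m t s) (g t (s + 1)))) := by
  calc
    (∑ f : Fin (r + 1) → Fin (p + 1) → Fin N,
       ∑ k : Fin (r + 1) → Fin (p + 1) → Fin N,
         ∏ t : Fin (r + 1), ∏ s : Fin (p + 1),
           (H (f t s) (k t s) * H (f (t + 1) s) (k t (s + 1)) *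
             conj (H (f t s) (k t (s + 1)) * H (f (t + 1) s) (k t s))))
        = ∑ f : Fin (r + 1) → Fin (p + 1) → Fin N,
            ∑ k : Fin (r + 1) → Fin (p + 1) → Fin N,
              ∏ t : Fin (p + 1), ∏ s : Fin (r + 1),
                (H (tq p r N f t s) (tq p r N k t s) *
                    H (tq p r N f t s) (tq p r N k (t + 1) (s + 1)) *
                  conj (H (tq p r N f t s) (tq p r N k (t + 1) s) *
                    H (tq p r N f t s) (tq p r N k t (s + 1)))) :=
      Finset.sum_congr rfl fun f _ => Finset.sum_congr rfl fun k _ => key H p r f k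
    _ = ∑ f : Fin (r + 1) → Fin (p + 1) → Fin N,
          ∑ g : Fin (p + 1) → Fin (r + 1) → Fin N,
            ∏ t : Fin (p + 1), ∏ s : Fin (r + 1),
              (H (tq p r N f t s) (g t s) * H (tq p r N f t s) (g (t + 1) (s + 1)) *
                conj (H (tq p r N f t s) (g (t + 1) s) * H (tq p r N f t s) (g t (s + 1)))) :=
      Finset.sum_congr rfl fun f _ =>
        Fintype.sum_equiv (tq p r N) _ _ fun k => rfl
    _ = ∑ g : Fin (p + 1) → Fin (r + 1) → Fin N,
          ∑ f : Fin (r + 1) → Fin (p + 1) → Fin N,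
            ∏ t : Fin (p + 1), ∏ s : Fin (r + 1),
              (H (tq p r N f t s) (g t s) * H (tq p r N f t s) (g (t + 1) (s + 1)) *
                conj (H (tq p r N f t s) (g (t + 1) s) * H (tq p r N f t s) (g t (s + 1)))) :=
      Finset.sum_comm
    _ = ∑ g : Fin (p + 1) → Fin (r + 1) → Fin N,
          ∑ m : Fin (p + 1) → Fin (r + 1) → Fin N,
            ∏ t : Fin (p + 1), ∏ s : Fin (r + 1),
              (H (m t s) (g t s) * H (m t s) (g (t + 1) (s + 1)) *
                conj (H (m t s) (g (t + 1) s) * H (m t s) (g t (s + 1)))) :=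
      Finset.sum_congr rfl fun g _ =>
        Fintype.sum_equiv (tq p r N) _ _ fun f => rfl

end MainAux

/-- `Tr(T_p^r) = (1/N^r)·Tr((X^{(r)})^p)` for all `p, r ≥ 1`. -/
theorem trace_Tmat_pow (N : ℕ) (hN : 1 ≤ N) (p r : ℕ) (hp : 1 ≤ p) (hr : 1 ≤ r)
    (H : Matrix (Fin N) (Fin N) ℂ) (hH : _root_.IsHadamard H) :
    Matrix.trace (Tmat H p ^ r) = ((N : ℂ) ^ r)⁻¹ * Matrix.trace (trunc H r ^ p) := by
  obtain ⟨p₁, rfl⟩ : ∃ p₁, p = p₁ + 1 := ⟨p - 1, by omega⟩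
  obtain ⟨r₁, rfl⟩ : ∃ r₁, r = r₁ + 1 := ⟨r - 1, by omega⟩
  rw [lhs_eq H p₁ r₁, rhs_eq H p₁ r₁, core H p₁ r₁]
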